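/- Let G be a finite abelian group with uniform measure μ, and let R(x) = Π_{i=1}^{d} (1 + ε_i φ_i(x)) where each φ_i is the real or imaginary part of a character u_{γ_i} of G and ε_i ∈ {−1,0,1}. Then the set Spec₀(R) = {γ ∈ Ĝ : R̂(γ) ≠ 0} is covered by a set Λ ⊆ Ĝ with |Λ| ≤ d, meaning every γ ∈ Spec₀(R) can be written as Σ_{λ∈Λ} ε_λ λ with ε_λ ∈ {−1,0,1}. -/

import Mathlib

open Finset Complex


section Cover
variable {A : Type*} [AddCommGroup A] [DecidableEq A]

def Cov (Λ : Finset A) (α : A) : Prop :=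
  ∃ η : A → ℤ, (∀ lam, η lam ∈ ({-1, 0, 1} : Set ℤ)) ∧ α = ∑ lam ∈ Λ, η lam • lam

lemma cov_mono {Λ Λ' : Finset A} (h : Λ ⊆ Λ') {α : A} (hc : Cov Λ α) : Cov Λ' α := by
  obtain ⟨η, hη, rfl⟩ := hc
  refine ⟨fun l => if l ∈ Λ then η l else 0, fun l => ?_, ?_⟩
  · by_cases hl : l ∈ Λ
    · simpa [hl] using hη l
    · simp [hl]
  · rw [← Finset.sum_subset h (fun x _ hx => by simp [hx])]
    exact Finset.sum_congr rfl fun x hx => by simp [hx]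

omit [DecidableEq A] in
lemma cov_neg {Λ : Finset A} {α : A} (hc : Cov Λ α) : Cov Λ (-α) := by
  obtain ⟨η, hη, rfl⟩ := hc
  refine ⟨fun l => -η l, fun l => ?_, ?_⟩
  · have := hη l; simp at this ⊢; omega
  · rw [← Finset.sum_neg_distrib]
    exact Finset.sum_congr rfl fun x hx => by rw [neg_zsmul]

lemma signed_interval (k : ℕ) (m : ℤ) (hm : 2 * |m| ≤ (k : ℤ) * (k + 1)) :
    ∃ e : ℕ → ℤ, (∀ j, e j ∈ ({-1, 0, 1} : Set ℤ)) ∧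
      m = ∑ j ∈ Finset.Ico 1 (k + 1), e j * j := by
  induction k generalizing m with
  | zero =>
    have h0 : (2:ℤ) * |m| ≤ 0 := by simpa using hm
    have hm0 : m = 0 := by
      have h1 := abs_nonneg m
      have h2 : |m| = 0 := by omega
      exact abs_eq_zero.mp h2
    exact ⟨fun _ => 0, by simp, by simp [hm0]⟩
  | succ k ih =>
    by_cases h : 2 * |m| ≤ (k : ℤ) * (k + 1)
    · obtain ⟨e, he, hsum⟩ := ih m h
      refine ⟨fun j => if j = k + 1 then 0 else e j, fun j => ?_, ?_⟩
      · by_cases hj : j = k + 1 <;> simp [hj, he j]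
      · rw [Finset.sum_Ico_succ_top (by omega)]
        beta_reduce
        rw [if_pos rfl, zero_mul, add_zero, hsum]
        refine Finset.sum_congr rfl fun j hj => ?_
        rw [if_neg (by simp at hj; omega)]
    · have hk2 : (2:ℤ) * k ≤ (k:ℤ) * (k + 1) := by
        have : 2 * k ≤ k * (k + 1) := by
          cases k with
          | zero => simp
          | succ n => nlinarith
        exact_mod_cast this
      have hge : |m| ≥ (k:ℤ) + 1 := by
        have hdvd : (2:ℤ) ∣ (k:ℤ) * (k+1) := (Int.even_mul_succ_self (k:ℤ)).two_dvd
        omega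
      obtain ⟨t, ht1, habs⟩ : ∃ t : ℤ, (t = 1 ∨ t = -1) ∧
          |m - t * (k + 1)| = |m| - (k + 1) := by
        rcases le_or_gt 0 m with h0 | h0
        · refine ⟨1, Or.inl rfl, ?_⟩
          rw [_root_.abs_of_nonneg h0] at hge ⊢
          rw [_root_.abs_of_nonneg (by omega)]; ring
        · refine ⟨-1, Or.inr rfl, ?_⟩
          rw [_root_.abs_of_nonpos (le_of_lt h0)] at hge ⊢
          rw [_root_.abs_of_nonpos (by omega)]; ring
      have hb : 2 * |m - t * (k + 1)| ≤ (k:ℤ) * (k + 1) := by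
        rw [habs]
        have h2 : 2 * |m| ≤ ((k:ℤ) + 1) * ((k:ℤ) + 2) := by push_cast at hm; linarith
        nlinarith
      obtain ⟨e, he, hsum⟩ := ih _ hb
      refine ⟨fun j => if j = k + 1 then t else e j, fun j => ?_, ?_⟩
      · by_cases hj : j = k + 1
        · simp only [hj, if_pos rfl]
          rcases ht1 with h' | h' <;> simp [h']
        · simpa [hj] using he j
      · rw [Finset.sum_Ico_succ_top (by omega)]
        beta_reduce
        rw [if_pos rfl]
        have hm' : m = (m - t * (k+1)) + t * (k+1) := by ring
        rw [hm', hsum]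
        push_cast
        congr 1
        refine Finset.sum_congr rfl fun j hj => ?_
        rw [if_neg (by simp at hj; omega)]

lemma cov_step (Λ : Finset A) (γ : A) :
    ∃ Λ' : Finset A, Λ ⊆ Λ' ∧ Λ'.card ≤ Λ.card + 1 ∧
      ∀ α, Cov Λ α → Cov Λ' (γ + α) := by
  classical
  -- existence of a good index
  have hex : ∃ j : ℕ, 1 ≤ j ∧ (j • γ ∉ Λ ∨ ∃ i < j, i • γ = j • γ) := by
    by_contra hno
    push_neg at hno
    have hmem : ∀ j : ℕ, 1 ≤ j → j • γ ∈ Λ := fun j hj => (hno j hj).1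
    have hinj : Set.InjOn (fun j : ℕ => j • γ) ↑(Finset.Icc 1 (Λ.card + 1)) := by
      intro a ha b hb hab
      by_contra hne
      rcases lt_or_gt_of_ne hne with hlt | hlt
      · exact (hno b (by simp at hb; omega)).2 a hlt hab
      · exact (hno a (by simp at ha; omega)).2 b hlt hab.symm
    have hsub : (Finset.Icc 1 (Λ.card + 1)).image (fun j : ℕ => j • γ) ⊆ Λ := by
      intro x hx
      simp only [Finset.mem_image, Finset.mem_Icc] at hx
      obtain ⟨j, ⟨hj1, _⟩, rfl⟩ := hx
      exact hmem j hj1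
    have h1 := Finset.card_le_card hsub
    rw [Finset.card_image_of_injOn hinj] at h1
    simp at h1
  set k := Nat.find hex with hkdef
  obtain ⟨hk1, hkalt⟩ := Nat.find_spec hex
  have hmin : ∀ j, 1 ≤ j → j < k → j • γ ∈ Λ ∧ ∀ i < j, i • γ ≠ j • γ := by
    intro j hj hjk
    have := Nat.find_min hex hjk
    push_neg at this
    exact this hj
  -- injectivity of j • γ on [1, k)
  have hinjIco : Set.InjOn (fun j : ℕ => j • γ) ↑(Finset.Ico 1 k) := by
    intro a ha b hb hab
    simp only [Finset.coe_Ico, Set.mem_Ico] at ha hb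
    by_contra hne
    rcases lt_or_gt_of_ne hne with hlt | hlt
    · exact (hmin b hb.1 hb.2).2 a hlt hab
    · exact (hmin a ha.1 ha.2).2 b hlt hab.symm
  set M : Finset A := (Finset.Ico 1 k).image (fun j : ℕ => j • γ) with hMdef
  have hMΛ : M ⊆ Λ := by
    intro x hx
    simp only [hMdef, Finset.mem_image, Finset.mem_Ico] at hx
    obtain ⟨j, ⟨hj1, hjk⟩, rfl⟩ := hx
    exact (hmin j hj1 hjk).1
  -- key computation: γ plus the M-part is a multiple of γ
  have hMsum : ∀ η : A → ℤ,
      γ + ∑ l ∈ M, η l • l = (1 + ∑ j ∈ Finset.Ico 1 k, η (j • γ) * j) • γ := by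
    intro η
    rw [hMdef, Finset.sum_image (fun a ha b hb => hinjIco (by simpa using ha) (by simpa using hb))]
    have : ∀ j ∈ Finset.Ico 1 k, η (j • γ) • (j • γ) = (η (j • γ) * (j:ℤ)) • γ := by
      intro j hj
      rw [← natCast_zsmul γ j, smul_smul]
    rw [Finset.sum_congr rfl this, ← Finset.sum_smul, add_zsmul, one_zsmul]
  by_cases hkΛ : k • γ ∈ Λ
  · -- Case B : k•γ coincides with an earlier multiple; Λ' = Λ
    have hcoin : ∃ i < k, i • γ = k • γ := by
      rcases hkalt with h | h
      · exact absurd hkΛ h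
      · exact h
    obtain ⟨i, hik, hieq⟩ := hcoin
    set n := k - i with hndef
    have hn1 : 1 ≤ n := by omega
    have hnγ : n • γ = 0 := by
      have : i • γ + n • γ = i • γ + 0 := by
        rw [add_zero, ← add_nsmul]
        rw [hndef]
        have : i + (k - i) = k := by omega
        rw [this, ← hieq]
      exact add_left_cancel this
    refine ⟨Λ, Finset.Subset.refl Λ, by omega, ?_⟩
    rintro α ⟨η, hη, rfl⟩
    set m : ℤ := 1 + ∑ j ∈ Finset.Ico 1 k, η (j • γ) * j with hmdef
    -- m • γ = r • γ with r = (m % n).toNat < n ≤ k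
    set r : ℕ := (m % (n:ℤ)).toNat with hrdef
    have hn0 : (0:ℤ) < (n:ℤ) := by exact_mod_cast hn1
    have hr0 : 0 ≤ m % (n:ℤ) := Int.emod_nonneg m (by omega)
    have hrn : m % (n:ℤ) < (n:ℤ) := Int.emod_lt_of_pos m hn0
    have hrk : r < k := by
      have : ((m % (n:ℤ)).toNat : ℤ) = m % (n:ℤ) := Int.toNat_of_nonneg hr0
      omega
    have hmr : m • γ = r • γ := by
      have hdiv : m = (n:ℤ) * (m / n) + m % n := (Int.mul_ediv_add_emod m n).symm
      calc m • γ = ((n:ℤ) * (m / n)) • γ + (m % (n:ℤ)) • γ := by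
            rw [← add_zsmul, ← hdiv]
        _ = (m / n) • ((n:ℤ) • γ) + (m % (n:ℤ)) • γ := by
            rw [mul_comm, mul_smul]
        _ = (m % (n:ℤ)) • γ := by
            rw [natCast_zsmul, hnγ, smul_zero, zero_add]
        _ = r • γ := by
            rw [← natCast_zsmul γ r, hrdef, Int.toNat_of_nonneg hr0]
    refine ⟨fun l => if l ∈ M then (if 1 ≤ r ∧ l = r • γ then 1 else 0) else η l,
      fun l => ?_, ?_⟩
    · beta_reduce
      by_cases hl : l ∈ M
      · rw [if_pos hl]
        by_cases hc : 1 ≤ r ∧ l = r • γ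
        · rw [if_pos hc]; simp
        · rw [if_neg hc]; simp
      · rw [if_neg hl]; exact hη l
    · beta_reduce
      rw [← Finset.sum_sdiff hMΛ, ← Finset.sum_sdiff hMΛ (f := fun l =>
        (if l ∈ M then (if 1 ≤ r ∧ l = r • γ then 1 else 0) else η l) • l)]
      have houter : ∀ l ∈ Λ \ M,
          (if l ∈ M then (if 1 ≤ r ∧ l = r • γ then 1 else 0) else η l) • l = η l • l := by
        intro l hl
        rw [if_neg (Finset.mem_sdiff.mp hl).2]
      rw [Finset.sum_congr rfl houter]
      have hinner : ∑ l ∈ M, (if l ∈ M then (if 1 ≤ r ∧ l = r • γ then 1 else 0) else η l) • l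
          = γ + ∑ l ∈ M, η l • l := by
        have hcongr : ∀ l ∈ M,
            (if l ∈ M then (if 1 ≤ r ∧ l = r • γ then 1 else 0) else η l) • l
            = (if 1 ≤ r ∧ l = r • γ then (1:ℤ) else 0) • l := by
          intro l hl; rw [if_pos hl]
        rw [Finset.sum_congr rfl hcongr, hMsum η, ← hmdef, hmr]
        by_cases hr1 : 1 ≤ r
        · have hrM : r • γ ∈ M := by
            rw [hMdef]
            exact Finset.mem_image.mpr ⟨r, Finset.mem_Ico.mpr ⟨hr1, hrk⟩, rfl⟩
          have hstep : ∀ l ∈ M, (if 1 ≤ r ∧ l = r • γ then (1:ℤ) else 0) • l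
              = if l = r • γ then l else 0 := by
            intro l hl
            by_cases hc : l = r • γ
            · rw [if_pos ⟨hr1, hc⟩, if_pos hc, one_smul]
            · rw [if_neg (fun h => hc h.2), if_neg hc, zero_smul]
          rw [Finset.sum_congr rfl hstep, Finset.sum_ite_eq' M (r • γ) (fun l => l),
            if_pos hrM]
        · have hr0' : r = 0 := by omega
          have hz : ∀ l ∈ M, (if 1 ≤ r ∧ l = r • γ then (1:ℤ) else 0) • l = 0 := by
            intro l hl
            rw [if_neg (fun h => hr1 h.1), zero_smul]
          rw [Finset.sum_congr rfl hz, Finset.sum_const_zero, hr0', zero_smul]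
      rw [hinner]
      abel
  · -- Case A : k • γ ∉ Λ; take Λ' = insert (k • γ) Λ
    have hA : k • γ ∉ Λ := hkΛ
    refine ⟨insert (k • γ) Λ, Finset.subset_insert _ _, Finset.card_insert_le _ _, ?_⟩
    rintro α ⟨η, hη, rfl⟩
    set m : ℤ := 1 + ∑ j ∈ Finset.Ico 1 k, η (j • γ) * j with hmdef
    have hηb : ∀ l, |η l| ≤ 1 := by
      intro l; have := hη l; simp at this; rcases this with h | h | h <;> simp [h]
    have hsb : |∑ j ∈ Finset.Ico 1 k, η (j • γ) * (j:ℤ)| ≤ ∑ j ∈ Finset.Ico 1 k, (j:ℤ) := by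
      refine (Finset.abs_sum_le_sum_abs _ _).trans ?_
      refine Finset.sum_le_sum fun j hj => ?_
      rw [abs_mul]
      calc |η (j • γ)| * |(j:ℤ)| ≤ 1 * |(j:ℤ)| :=
            mul_le_mul_of_nonneg_right (hηb _) (abs_nonneg _)
        _ = (j:ℤ) := by rw [one_mul, _root_.abs_of_nonneg (Int.natCast_nonneg j)]
    have hgauss : ∀ K : ℕ, 2 * ∑ j ∈ Finset.Ico 1 K, (j:ℤ) = (K:ℤ) * (K - 1) := by
      intro K
      induction K with
      | zero => simp
      | succ n ihn =>
        rcases Nat.eq_zero_or_pos n with rfl | hn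
        · simp
        · rw [Finset.sum_Ico_succ_top hn, mul_add, ihn]
          push_cast
          ring
    have hmb : 2 * |m| ≤ (k:ℤ) * (k + 1) := by
      have h1 : |m| ≤ 1 + ∑ j ∈ Finset.Ico 1 k, (j:ℤ) := by
        rw [hmdef]
        exact (abs_add_le 1 _).trans (by simpa using hsb)
      have hP : (k:ℤ) * (k + 1) = (k:ℤ) * (k - 1) + 2 * k := by ring
      have hk1' : (1:ℤ) ≤ (k:ℤ) := by exact_mod_cast hk1
      have hG := hgauss k
      linarith
    obtain ⟨e, he, hesum⟩ := signed_interval k m hmb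
    have hinj' : Set.InjOn (fun j : ℕ => j • γ) ↑(Finset.Ico 1 (k + 1)) := by
      intro a ha b hb hab
      simp only [Finset.coe_Ico, Set.mem_Ico] at ha hb
      by_contra hne
      have key : ∀ a b : ℕ, 1 ≤ a → a < b → b < k + 1 → a • γ ≠ b • γ := by
        intro a b ha1 hab' hbk
        rcases Nat.lt_or_ge b k with hbk' | hbk'
        · exact (hmin b (by omega) hbk').2 a hab'
        · have hbk'' : b = k := by omega
          subst hbk''
          intro hcon
          exact hA (hcon ▸ (hmin a ha1 (by omega)).1)
      rcases lt_or_gt_of_ne hne with hlt | hlt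
      · exact key a b ha.1 hlt hb.2 hab
      · exact key b a hb.1 hlt ha.2 hab.symm
    set M' : Finset A := (Finset.Ico 1 (k + 1)).image (fun j : ℕ => j • γ) with hM'def
    have hkM : k • γ ∉ M := by
      intro hmem
      exact hA (hMΛ hmem)
    have hM'eq : M' = insert (k • γ) M := by
      have h1 : Finset.Ico 1 (k + 1) = insert k (Finset.Ico 1 k) := by
        rw [Finset.Ico_add_one_right_eq_Icc]
        exact (Finset.Ico_insert_right hk1).symm
      rw [hM'def, hMdef, h1, Finset.image_insert]
    have hη'def : True := trivial
    set invidx : A → ℕ := Function.invFunOn (fun j : ℕ => j • γ) ↑(Finset.Ico 1 (k + 1))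
      with hinvdef
    have hinvid : ∀ j ∈ Finset.Ico 1 (k + 1), invidx (j • γ) = j := by
      intro j hj
      exact hinj'.leftInvOn_invFunOn (by simpa using hj)
    refine ⟨fun l => if l ∈ M' then e (invidx l) else η l, fun l => ?_, ?_⟩
    · beta_reduce
      by_cases hl : l ∈ M'
      · rw [if_pos hl]; exact he _
      · rw [if_neg hl]; exact hη l
    · beta_reduce
      have hsplit : insert (k • γ) Λ = M' ∪ (Λ \ M) := by
        rw [hM'eq, Finset.insert_union, Finset.union_sdiff_of_subset hMΛ]
      have hdisj : Disjoint M' (Λ \ M) := by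
        rw [hM'eq, Finset.disjoint_left]
        intro x hx hx'
        rcases Finset.mem_insert.mp hx with rfl | hx2
        · exact hA (Finset.mem_sdiff.mp hx').1
        · exact (Finset.mem_sdiff.mp hx').2 hx2
      rw [hsplit, Finset.sum_union hdisj]
      have houter : ∀ l ∈ Λ \ M,
          (if l ∈ M' then e (invidx l) else η l) • l = η l • l := by
        intro l hl
        have hlM' : l ∉ M' := by
          rw [hM'eq]
          intro hcon
          rcases Finset.mem_insert.mp hcon with rfl | hx2
          · exact hA (Finset.mem_sdiff.mp hl).1
          · exact (Finset.mem_sdiff.mp hl).2 hx2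
        rw [if_neg hlM']
      rw [Finset.sum_congr rfl houter]
      have hinner : ∑ l ∈ M', (if l ∈ M' then e (invidx l) else η l) • l
          = γ + ∑ l ∈ M, η l • l := by
        rw [hM'def, Finset.sum_image (fun a ha b hb =>
          hinj' (by simpa using ha) (by simpa using hb))]
        have hterm : ∀ j ∈ Finset.Ico 1 (k + 1),
            (if (j • γ) ∈ M' then e (invidx (j • γ)) else η (j • γ)) • (j • γ)
            = (e j * (j:ℤ)) • γ := by
          intro j hj
          have hjM' : j • γ ∈ M' := by
            rw [hM'def]
            exact Finset.mem_image.mpr ⟨j, hj, rfl⟩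
          rw [if_pos hjM', hinvid j hj, ← natCast_zsmul γ j, smul_smul]
        rw [Finset.sum_congr rfl hterm, ← Finset.sum_smul, ← hesum, hMsum η, ← hmdef]
      rw [hinner, ← Finset.sum_sdiff hMΛ]
      abel



lemma cov_step' (Λ : Finset A) (γ : A) :
    ∃ Λ' : Finset A, Λ ⊆ Λ' ∧ Λ'.card ≤ Λ.card + 1 ∧
      ∀ α (c : ℤ), c ∈ ({-1, 0, 1} : Set ℤ) → Cov Λ α → Cov Λ' (c • γ + α) := by
  obtain ⟨Λ', hsub, hcard, hstep⟩ := cov_step Λ γ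
  refine ⟨Λ', hsub, hcard, fun α c hc hα => ?_⟩
  simp only [Set.mem_insert_iff, Set.mem_singleton_iff] at hc
  rcases hc with rfl | rfl | rfl
  · have h1 := hstep (-α) (cov_neg hα)
    have h2 := cov_neg h1
    have : -(γ + -α) = (-1 : ℤ) • γ + α := by
      rw [neg_zsmul, one_zsmul]; abel
    rwa [this] at h2
  · rw [zero_smul, zero_add]
    exact cov_mono hsub hα
  · rw [one_zsmul]
    exact hstep α hα

lemma cov_exists (d : ℕ) (γ : Fin d → A) :
    ∃ Λ : Finset A, Λ.card ≤ d ∧ ∀ s : Fin d → ℤ,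
      (∀ i, s i ∈ ({-1, 0, 1} : Set ℤ)) → Cov Λ (∑ i, s i • γ i) := by
  induction d with
  | zero =>
    exact ⟨∅, le_refl _, fun s hs => ⟨fun _ => 0, by simp, by simp⟩⟩
  | succ d ih =>
    obtain ⟨Λ, hcard, hΛ⟩ := ih (fun i => γ i.succ)
    obtain ⟨Λ', hsub, hcard', hstep⟩ := cov_step' Λ (γ 0)
    refine ⟨Λ', by omega, fun s hs => ?_⟩
    rw [Fin.sum_univ_succ]
    exact hstep _ _ (hs 0) (hΛ _ fun i => hs i.succ)

end Cover



section Analytic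
variable {G A : Type*} [Fintype G] [AddCommGroup A]

lemma u_sum (u : A → G → ℂ)
    (hmul : ∀ γ γ' x, u (γ + γ') x = u γ x * u γ' x)
    (hone : ∀ x, u 0 x = 1)
    {ι : Type*} (s : Finset ι) (g : ι → A) (x : G) :
    u (∑ i ∈ s, g i) x = ∏ i ∈ s, u (g i) x := by
  induction s using Finset.cons_induction with
  | empty => simpa using hone x
  | cons a s ha ih =>
    rw [Finset.sum_cons, Finset.prod_cons, hmul, ih]

lemma spec_mem (u : A → G → ℂ)
    (hmul : ∀ γ γ' x, u (γ + γ') x = u γ x * u γ' x)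
    (hone : ∀ x, u 0 x = 1)
    (hconj : ∀ γ x, u (-γ) x = (starRingEnd ℂ) (u γ x))
    (horth : ∀ γ : A, γ ≠ 0 → ∑ x, u γ x = 0)
    (d : ℕ) (γ : Fin d → A) (ε : Fin d → ℝ)
    (φ : Fin d → G → ℝ)
    (hφ : ∀ i, (φ i = fun x => (u (γ i) x).re) ∨ (φ i = fun x => (u (γ i) x).im))
    (R : G → ℝ) (hR : ∀ x, R x = ∏ i, (1 + ε i * φ i x))
    (α : A) (hα : (∑ x, (R x : ℂ) * (starRingEnd ℂ) (u α x)) ≠ 0) :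
    ∃ s : Fin d → ℤ, (∀ i, s i ∈ ({-1, 0, 1} : Set ℤ)) ∧ α = ∑ i, s i • γ i := by
  classical
  set C : Finset ℤ := {-1, 0, 1} with hC
  set coef : Fin d → ℤ → ℂ := fun i c =>
    if c = 0 then 1
    else if φ i = (fun x => (u (γ i) x).re) then (ε i : ℂ) / 2
    else -(c : ℂ) * I * (ε i) / 2 with hcoef
  have hfact : ∀ (i : Fin d) (x : G),
      ((1 + ε i * φ i x : ℝ) : ℂ) = ∑ c ∈ C, coef i c * u (c • γ i) x := by
    intro i x
    have hCeq : C = insert (-1 : ℤ) (insert 0 {1}) := rfl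
    rw [hCeq, Finset.sum_insert (by decide), Finset.sum_insert (by decide),
      Finset.sum_singleton]
    rw [show ((-1 : ℤ) • γ i) = -(γ i) by rw [neg_zsmul, one_zsmul],
      show ((0 : ℤ) • γ i) = 0 from zero_zsmul _,
      show ((1 : ℤ) • γ i) = γ i from one_zsmul _,
      hone x, hconj (γ i) x]
    by_cases hre : φ i = (fun x => (u (γ i) x).re)
    · have hcm1 : coef i (-1) = (ε i : ℂ) / 2 := by
        rw [hcoef]; beta_reduce; rw [if_neg (by decide), if_pos hre]
      have hc0 : coef i 0 = 1 := by
        rw [hcoef]; beta_reduce; rw [if_pos rfl]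
      have hc1 : coef i 1 = (ε i : ℂ) / 2 := by
        rw [hcoef]; beta_reduce; rw [if_neg (by decide), if_pos hre]
      rw [hcm1, hc0, hc1]
      have hpx : φ i x = (u (γ i) x).re := by rw [hre]
      rw [hpx]
      push_cast
      linear_combination (norm := (push_cast; ring1)) (-(ε i : ℂ) / 2) * (Complex.add_conj (u (γ i) x))
    · have him : φ i = (fun x => (u (γ i) x).im) := (hφ i).resolve_left hre
      have hcm1 : coef i (-1) = I * (ε i : ℂ) / 2 := by
        rw [hcoef]; beta_reduce; rw [if_neg (by decide), if_neg hre]; push_cast; ring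
      have hc0 : coef i 0 = 1 := by
        rw [hcoef]; beta_reduce; rw [if_pos rfl]
      have hc1 : coef i 1 = -I * (ε i : ℂ) / 2 := by
        rw [hcoef]; beta_reduce; rw [if_neg (by decide), if_neg hre]; push_cast; ring
      rw [hcm1, hc0, hc1]
      have hpx : φ i x = (u (γ i) x).im := by rw [him]
      rw [hpx]
      push_cast
      linear_combination (norm := (push_cast; ring1)) ((ε i : ℂ) * I / 2) * (Complex.sub_conj (u (γ i) x)) +
        ((ε i : ℂ) * ((u (γ i) x).im : ℂ)) * Complex.I_sq
  have hexp : ∀ x : G, (R x : ℂ) =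
      ∑ s ∈ Fintype.piFinset (fun _ : Fin d => C), ∏ i, (coef i (s i) * u (s i • γ i) x) := by
    intro x
    rw [hR x]
    push_cast
    rw [show (∏ i, (1 + (ε i : ℂ) * (φ i x : ℂ))) = ∏ i, ((1 + ε i * φ i x : ℝ) : ℂ) by
      push_cast; rfl]
    rw [Finset.prod_congr rfl fun i _ => hfact i x]
    exact Finset.prod_univ_sum _ _
  have hsum : (∑ x, (R x : ℂ) * (starRingEnd ℂ) (u α x)) =
      ∑ s ∈ Fintype.piFinset (fun _ : Fin d => C),
        (∏ i, coef i (s i)) * ∑ x, u ((∑ i, s i • γ i) - α) x := by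
    rw [Finset.sum_congr rfl fun x _ => by rw [hexp x, Finset.sum_mul]]
    rw [Finset.sum_comm]
    refine Finset.sum_congr rfl fun s _ => ?_
    rw [Finset.mul_sum]
    refine Finset.sum_congr rfl fun x _ => ?_
    rw [Finset.prod_mul_distrib, ← u_sum u hmul hone Finset.univ (fun i => s i • γ i) x]
    rw [← hconj α x, mul_assoc, ← hmul, ← sub_eq_add_neg]
  by_contra hno
  push_neg at hno
  apply hα
  rw [hsum]
  refine Finset.sum_eq_zero fun s hs => ?_
  have hsC : ∀ i, s i ∈ ({-1, 0, 1} : Set ℤ) := by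
    intro i
    have := (Fintype.mem_piFinset.mp hs) i
    simp only [hC, Finset.mem_insert, Finset.mem_singleton] at this
    simpa using this
  have hne : (∑ i, s i • γ i) - α ≠ 0 := by
    intro h
    exact hno s hsC (by rw [eq_comm, ← sub_eq_zero]; rw [eq_comm] at h ⊢; exact h)
  rw [horth _ hne, mul_zero]

end Analytic


/-- The nonzero Fourier spectrum of a degree-`d` Riesz product built from real
and imaginary parts of characters is covered by a set `Λ` of at most `d`
frequencies: every `α` with `R̂(α) ≠ 0` is a `{−1,0,1}`-combination of `Λ`.
Here `G` is a finite abelian group with uniform measure, `A` its dual group,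
and `u : A → G → ℂ` the character pairing. -/
theorem riesz_product_spectrum_covered
    {G A : Type*} [Fintype G] [Nonempty G] [AddCommGroup A] [DecidableEq A]
    (u : A → G → ℂ)
    (hmul : ∀ γ γ' x, u (γ + γ') x = u γ x * u γ' x)
    (hone : ∀ x, u 0 x = 1)
    (hconj : ∀ γ x, u (-γ) x = (starRingEnd ℂ) (u γ x))
    (hnorm : ∀ γ x, ‖u γ x‖ = 1)
    (horth : ∀ γ : A, γ ≠ 0 → ∑ x, u γ x = 0)
    (d : ℕ) (γ : Fin d → A) (ε : Fin d → ℝ)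
    (hε : ∀ i, ε i ∈ ({-1, 0, 1} : Set ℝ))
    (φ : Fin d → G → ℝ)
    (hφ : ∀ i, (φ i = fun x => (u (γ i) x).re) ∨ (φ i = fun x => (u (γ i) x).im))
    (R : G → ℝ) (hR : ∀ x, R x = ∏ i, (1 + ε i * φ i x)) :
    ∃ Λ : Finset A, Λ.card ≤ d ∧
      ∀ α : A,
        (∑ x, (R x : ℂ) * (starRingEnd ℂ) (u α x)) / (Fintype.card G : ℂ) ≠ 0 →
        ∃ η : A → ℤ, (∀ lam, η lam ∈ ({-1, 0, 1} : Set ℤ)) ∧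
          α = ∑ lam ∈ Λ, η lam • lam := by
  classical
  obtain ⟨Λ, hcard, hcov⟩ := cov_exists d γ
  refine ⟨Λ, hcard, fun α hα => ?_⟩
  have hnum : (∑ x, (R x : ℂ) * (starRingEnd ℂ) (u α x)) ≠ 0 :=
    fun h => hα (by rw [h, zero_div])
  obtain ⟨s, hs, hseq⟩ := spec_mem u hmul hone hconj horth d γ ε φ hφ R hR α hnum
  obtain ⟨η, hη, heq⟩ := hcov s hs
  exact ⟨η, hη, by rw [hseq]; exact heq⟩
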